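/- Let (X,μ) and (I,ν) be connected weighted graphs with bounded row sums, and suppose there exists a local isomorphism f : X → I, i.e. ∑_{z ∈ f^{-1}(i)} μ(x,z) = ν(f(x), i) for all x ∈ X and i ∈ I. Then R_μ ≥ R_ν, where R_μ := 1/limsup_{n→∞}(μ^{(n)}(x,y))^{1/n} and R_ν := 1/limsup_{n→∞}(ν^{(n)}(i,j))^{1/n} are the convergence parameters (independent of the base points by connectedness). -/

import Mathlib

open Filter MeasureTheory ProbabilityTheory
open scoped ENNReal NNReal

/-- `n`-step weights (matrix powers) of a weight kernel `μ` on a countable set. -/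
noncomputable def matPow {X : Type*} [DecidableEq X] (μ : X → X → ℝ≥0∞) :
    ℕ → X → X → ℝ≥0∞
  | 0, x, y => if x = y then 1 else 0
  | n + 1, x, y => ∑' z, matPow μ n x z * μ z y

/-- `(X, μ)` has bounded row sums. -/
def bddRows {X : Type*} (μ : X → X → ℝ≥0∞) : Prop :=
  ∃ K : ℝ≥0∞, K ≠ ⊤ ∧ ∀ x, ∑' y, μ x y ≤ K

/-- `(X, μ)` is connected. -/
def connectedW {X : Type*} [DecidableEq X] (μ : X → X → ℝ≥0∞) : Prop :=
  ∀ x y, ∃ n, 0 < n ∧ 0 < matPow μ n x y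

/-- `limsup_n (μ^{(n)}(x,y))^{1/n}`, the reciprocal of the convergence parameter. -/
noncomputable def lsRoot {X : Type*} [DecidableEq X] (μ : X → X → ℝ≥0∞) (x y : X) : ℝ≥0∞ :=
  Filter.limsup (fun n : ℕ => matPow μ n x y ^ (n : ℝ)⁻¹) Filter.atTop

/-- The convergence parameter `R = 1 / limsup_n (μ^{(n)}(x,y))^{1/n}`. -/
noncomputable def convR {X : Type*} [DecidableEq X] (μ : X → X → ℝ≥0∞) (x y : X) : ℝ≥0∞ :=
  (lsRoot μ x y)⁻¹

open Classical in
/-- Restriction of a weight kernel to a subset (extended by `0`). -/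
noncomputable def restrictW {X : Type*} (μ : X → X → ℝ≥0∞) (A : Set X) : X → X → ℝ≥0∞ :=
  fun x y => if x ∈ A ∧ y ∈ A then μ x y else 0
/-- `f : X → I` is a local isomorphism of `(X, μ)` on `(I, ν)`:
`∑_{z ∈ f⁻¹(i)} μ(x, z) = ν(f x, i)` for all `x, i`. -/
def IsLocalIsom {X I : Type*} (μ : X → X → ℝ≥0∞) (ν : I → I → ℝ≥0∞) (f : X → I) : Prop :=
  ∀ (x : X) (i : I), ∑' z : {z : X // f z = i}, μ x z.1 = ν (f x) i

lemma matPow_rowsum {X : Type*} [DecidableEq X] (μ : X → X → ℝ≥0∞) {K : ℝ≥0∞}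
    (hK : ∀ x, ∑' y, μ x y ≤ K) : ∀ n x, ∑' y, matPow μ n x y ≤ K ^ n := by
  intro n
  induction n with
  | zero =>
    intro x
    have h : ∀ y, matPow μ 0 x y = if y = x then (1:ℝ≥0∞) else 0 := by
      intro y; simp only [matPow]; split <;> simp_all [eq_comm]
    rw [tsum_congr h, tsum_ite_eq]; simp
  | succ n ih =>
    intro x
    calc ∑' y, matPow μ (n+1) x y = ∑' y, ∑' z, matPow μ n x z * μ z y := rfl
      _ = ∑' z, ∑' y, matPow μ n x z * μ z y := ENNReal.tsum_comm
      _ = ∑' z, matPow μ n x z * ∑' y, μ z y := by simp [ENNReal.tsum_mul_left]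
      _ ≤ ∑' z, matPow μ n x z * K := by gcongr with z; exact hK z
      _ = (∑' z, matPow μ n x z) * K := ENNReal.tsum_mul_right
      _ ≤ K ^ n * K := by gcongr; exact ih x
      _ = K ^ (n+1) := (pow_succ K n).symm

lemma matPow_le {X : Type*} [DecidableEq X] (μ : X → X → ℝ≥0∞) {K : ℝ≥0∞}
    (hK : ∀ x, ∑' y, μ x y ≤ K) (n : ℕ) (x y : X) : matPow μ n x y ≤ K ^ n :=
  (ENNReal.le_tsum y).trans (matPow_rowsum μ hK n x)

lemma matPow_add {X : Type*} [DecidableEq X] (μ : X → X → ℝ≥0∞) (m n : ℕ) (x y : X) :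
    matPow μ (m + n) x y = ∑' z, matPow μ m x z * matPow μ n z y := by
  induction n generalizing y with
  | zero =>
    have h : ∀ z, matPow μ m x z * matPow μ 0 z y = if z = y then matPow μ m x z else 0 := by
      intro z; simp only [matPow]; split <;> simp
    rw [Nat.add_zero, tsum_congr h, tsum_eq_single y (fun b hb => if_neg hb), if_pos rfl]
  | succ n ih =>
    calc matPow μ (m + (n+1)) x y = matPow μ ((m + n) + 1) x y := by ring_nf
      _ = ∑' z, matPow μ (m+n) x z * μ z y := rfl
      _ = ∑' z, (∑' w, matPow μ m x w * matPow μ n w z) * μ z y := by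
          exact tsum_congr fun z => by rw [ih]
      _ = ∑' z, ∑' w, matPow μ m x w * matPow μ n w z * μ z y := by
          exact tsum_congr fun z => ENNReal.tsum_mul_right.symm
      _ = ∑' w, ∑' z, matPow μ m x w * (matPow μ n w z * μ z y) := by
          rw [ENNReal.tsum_comm]; exact tsum_congr fun w => tsum_congr fun z => by ring
      _ = ∑' w, matPow μ m x w * ∑' z, matPow μ n w z * μ z y := by
          exact tsum_congr fun w => ENNReal.tsum_mul_left
      _ = ∑' w, matPow μ m x w * matPow μ (n+1) w y := rfl

lemma tsum_fiber {X I : Type*} (f : X → I) (g : X → ℝ≥0∞) :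
    ∑' i, ∑' z : {z : X // f z = i}, g z.1 = ∑' z, g z := by
  rw [← ENNReal.tsum_sigma (fun i (z : {z : X // f z = i}) => g z.1)]
  exact Equiv.tsum_eq (Equiv.sigmaFiberEquiv f) g


lemma matPow_lift {X I : Type*} [DecidableEq X] [DecidableEq I]
    (μ : X → X → ℝ≥0∞) (ν : I → I → ℝ≥0∞) (f : X → I) (hf : IsLocalIsom μ ν f) :
    ∀ (n : ℕ) (x : X) (j : I),
      matPow ν n (f x) j = ∑' z : {z : X // f z = j}, matPow μ n x z.1 := by
  intro n
  induction n with
  | zero =>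
    intro x j
    by_cases h : f x = j
    · rw [show matPow ν 0 (f x) j = 1 by simp [matPow, h]]
      rw [tsum_eq_single (⟨x, h⟩ : {z : X // f z = j})]
      · simp [matPow]
      · intro b hb
        have : x ≠ b.1 := fun he => hb (Subtype.ext he.symm)
        simp [matPow, this]
    · rw [show matPow ν 0 (f x) j = 0 by simp [matPow, h]]
      symm
      have hz : ∀ z : {z : X // f z = j}, matPow μ 0 x z.1 = 0 := by
        intro z
        have : x ≠ z.1 := fun he => h (by rw [he]; exact z.2)
        simp [matPow, this]
      rw [tsum_congr hz, tsum_zero]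
  | succ n ih =>
    intro x j
    calc matPow ν (n+1) (f x) j = ∑' i, matPow ν n (f x) i * ν i j := rfl
      _ = ∑' i, (∑' z : {z : X // f z = i}, matPow μ n x z.1) * ν i j := by
          exact tsum_congr fun i => by rw [ih]
      _ = ∑' i, ∑' z : {z : X // f z = i}, matPow μ n x z.1 * ν i j := by
          exact tsum_congr fun i => ENNReal.tsum_mul_right.symm
      _ = ∑' i, ∑' z : {z : X // f z = i},
            (matPow μ n x z.1 * ∑' w : {w : X // f w = j}, μ z.1 w.1) := by
          refine tsum_congr fun i => tsum_congr fun z => ?_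
          rw [hf z.1 j, z.2]
      _ = ∑' z : X, matPow μ n x z * ∑' w : {w : X // f w = j}, μ z w.1 :=
          tsum_fiber f (fun z => matPow μ n x z * ∑' w : {w : X // f w = j}, μ z w.1)
      _ = ∑' z : X, ∑' w : {w : X // f w = j}, matPow μ n x z * μ z w.1 := by
          exact tsum_congr fun z => ENNReal.tsum_mul_left.symm
      _ = ∑' w : {w : X // f w = j}, ∑' z : X, matPow μ n x z * μ z w.1 :=
          ENNReal.tsum_comm
      _ = ∑' w : {w : X // f w = j}, matPow μ (n+1) x w.1 := rfl

lemma tendsto_rpow_aux {c : ℝ≥0∞} (hc0 : c ≠ 0) (hct : c ≠ ⊤) {e : ℕ → ℝ} {l : ℝ}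
    (he : Tendsto e atTop (nhds l)) :
    Tendsto (fun n => c ^ e n) atTop (nhds (c ^ l)) := by
  have hC : 0 < c.toReal := ENNReal.toReal_pos hc0 hct
  have key : ∀ x : ℝ, c ^ x = ENNReal.ofReal (c.toReal ^ x) := by
    intro x
    conv_lhs => rw [← ENNReal.ofReal_toReal hct]
    rw [ENNReal.ofReal_rpow_of_pos hC]
  simp only [key]
  refine ENNReal.continuous_ofReal.continuousAt.tendsto.comp ?_
  have hcont : ContinuousAt (fun y : ℝ => c.toReal ^ y) l := by
    have h1 : ContinuousAt (fun p : ℝ × ℝ => p.1 ^ p.2) (c.toReal, l) :=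
      Real.continuousAt_rpow _ (Or.inl hC.ne')
    exact h1.comp ((continuous_const.prodMk continuous_id).continuousAt)
  exact hcont.tendsto.comp he

lemma lsRoot_base_aux {I : Type*} [DecidableEq I] (ν : I → I → ℝ≥0∞)
    {K : ℝ≥0∞} (hKt : K ≠ ⊤) (hK : ∀ x, ∑' y, ν x y ≤ K)
    (hc : ∀ x y, ∃ n, 0 < n ∧ 0 < matPow ν n x y) (i j i' j' : I) :
    Filter.limsup (fun n : ℕ => matPow ν n i' j' ^ (n : ℝ)⁻¹) Filter.atTop ≤
      Filter.limsup (fun n : ℕ => matPow ν n i j ^ (n : ℝ)⁻¹) Filter.atTop := by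
  obtain ⟨k, hk0, hk⟩ := hc i i'
  obtain ⟨l, hl0, hl⟩ := hc j' j
  set m := k + l with hm
  have hm0 : 0 < m := by omega
  set c : ℝ≥0∞ := matPow ν k i i' * matPow ν l j' j with hcdef
  have hc0 : c ≠ 0 := (ENNReal.mul_pos hk.ne' hl.ne').ne'
  have hct : c ≠ ⊤ := by
    have h1 : c ≤ K ^ k * K ^ l := mul_le_mul' (matPow_le ν hK k i i') (matPow_le ν hK l j' j)
    exact ne_top_of_le_ne_top (by simp [ENNReal.mul_ne_top, ENNReal.pow_ne_top hKt]) h1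
  -- key inequality
  have key : ∀ n : ℕ, c * matPow ν n i' j' ≤ matPow ν (n + m) i j := by
    intro n
    have hidx : n + m = k + (n + l) := by omega
    rw [hidx, matPow_add]
    calc c * matPow ν n i' j'
        = matPow ν k i i' * (matPow ν n i' j' * matPow ν l j' j) := by
          rw [hcdef]; ring
      _ ≤ matPow ν k i i' * matPow ν (n + l) i' j := by
          gcongr
          rw [matPow_add]
          exact ENNReal.le_tsum j'
      _ ≤ ∑' z, matPow ν k i z * matPow ν (n + l) z j := ENNReal.le_tsum i'
  -- limsup argument
  set A : ℕ → ℝ≥0∞ := fun n => matPow ν n i j ^ (n : ℝ)⁻¹ with hA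
  have claim : ∀ r, r < Filter.limsup (fun n : ℕ => matPow ν n i' j' ^ (n : ℝ)⁻¹) atTop →
      r ≤ Filter.limsup A atTop := by
    intro r hrS
    obtain ⟨r', hrr', hr'S⟩ := exists_between hrS
    have hr'0 : r' ≠ 0 := (bot_le.trans_lt hrr').ne'
    have hr't : r' ≠ ⊤ := ne_top_of_lt hr'S
    have hfreq : ∃ᶠ n in atTop, r' < matPow ν n i' j' ^ (n : ℝ)⁻¹ :=
      Filter.frequently_lt_of_lt_limsup (by isBoundedDefault) hr'S
    -- tendsto of the comparison sequence
    have he1 : Tendsto (fun n : ℕ => ((n + m : ℕ) : ℝ)⁻¹) atTop (nhds 0) := by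
      have : Tendsto (fun n : ℕ => ((n + m : ℕ) : ℝ)) atTop atTop := by
        exact tendsto_natCast_atTop_atTop.comp (tendsto_add_atTop_nat m)
      exact tendsto_inv_atTop_zero.comp this
    have he2 : Tendsto (fun n : ℕ => (n : ℝ) * ((n + m : ℕ) : ℝ)⁻¹) atTop (nhds 1) := by
      have heq : ∀ n : ℕ, (n : ℝ) * ((n + m : ℕ) : ℝ)⁻¹ = 1 - m * ((n + m : ℕ) : ℝ)⁻¹ := by
        intro n
        have hpos : ((n + m : ℕ) : ℝ) ≠ 0 := Nat.cast_ne_zero.mpr (by omega)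
        field_simp
        push_cast; ring
      simp only [heq]
      have := he1.const_mul (m : ℝ)
      simpa using (tendsto_const_nhds.sub this)
    have t1 : Tendsto (fun n : ℕ => c ^ ((n + m : ℕ) : ℝ)⁻¹) atTop (nhds 1) := by
      simpa using tendsto_rpow_aux hc0 hct he1
    have t2 : Tendsto (fun n : ℕ => r' ^ ((n : ℝ) * ((n + m : ℕ) : ℝ)⁻¹)) atTop (nhds r') := by
      simpa using tendsto_rpow_aux hr'0 hr't he2
    have htend : Tendsto
        (fun n : ℕ => c ^ ((n + m : ℕ) : ℝ)⁻¹ * r' ^ ((n : ℝ) * ((n + m : ℕ) : ℝ)⁻¹))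
        atTop (nhds r') := by
      have := ENNReal.Tendsto.mul t1 (Or.inl one_ne_zero) t2 (Or.inr ENNReal.one_ne_top)
      simpa using this
    have hev : ∀ᶠ n : ℕ in atTop,
        r < c ^ ((n + m : ℕ) : ℝ)⁻¹ * r' ^ ((n : ℝ) * ((n + m : ℕ) : ℝ)⁻¹) :=
      htend.eventually (Ioi_mem_nhds hrr')
    have hfreq2 : ∃ᶠ n : ℕ in atTop, r ≤ A (n + m) := by
      refine ((hfreq.and_eventually hev).and_eventually (eventually_ge_atTop 1)).mono ?_
      rintro n ⟨⟨h1, h2⟩, h3⟩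
      have hn0 : (n : ℝ) ≠ 0 := Nat.cast_ne_zero.mpr (by omega)
      have hbn : r' ^ (n : ℝ) ≤ matPow ν n i' j' := by
        have h4 : r' ^ (n : ℝ) ≤ (matPow ν n i' j' ^ (n : ℝ)⁻¹) ^ (n : ℝ) :=
          ENNReal.rpow_le_rpow h1.le (by positivity)
        rwa [← ENNReal.rpow_mul, inv_mul_cancel₀ hn0, ENNReal.rpow_one] at h4
      have h5 : c * r' ^ (n : ℝ) ≤ matPow ν (n + m) i j :=
        le_trans (by gcongr) (key n)
      have h6 : (c * r' ^ (n : ℝ)) ^ ((n + m : ℕ) : ℝ)⁻¹ ≤ A (n + m) :=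
        ENNReal.rpow_le_rpow h5 (by positivity)
      rw [ENNReal.mul_rpow_of_nonneg _ _ (by positivity), ← ENNReal.rpow_mul] at h6
      exact le_trans h2.le h6
    have hfreq3 : ∃ᶠ N : ℕ in atTop, r ≤ A N := by
      rw [← Filter.map_add_atTop_eq_nat m, Filter.frequently_map]
      exact hfreq2
    exact Filter.le_limsup_of_frequently_le hfreq3 (by isBoundedDefault)
  by_contra hlt
  push_neg at hlt
  obtain ⟨r, hr1, hr2⟩ := exists_between hlt
  exact absurd (claim r hr2) (not_le.mpr hr1)

/-- if there is a local isomorphism of the connected weighted graph `(X, μ)`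
on the connected weighted graph `(I, ν)`, then `R_μ ≥ R_ν`. -/
theorem localIsom_convR_le
    {X I : Type*} [Countable X] [DecidableEq X] [Countable I] [DecidableEq I]
    (μ : X → X → ℝ≥0∞) (ν : I → I → ℝ≥0∞)
    (hμ : bddRows μ) (hν : bddRows ν)
    (hcμ : connectedW μ) (hcν : connectedW ν)
    (f : X → I) (hf : IsLocalIsom μ ν f) :
    ∀ (x y : X) (i j : I), convR ν i j ≤ convR μ x y := by
  intro x y i j
  obtain ⟨K, hKt, hK⟩ := hν
  have h1 : lsRoot μ x y ≤ lsRoot ν (f x) (f y) := by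
    refine Filter.limsup_le_limsup (Filter.Eventually.of_forall fun n => ?_)
    refine ENNReal.rpow_le_rpow ?_ (by positivity)
    rw [matPow_lift μ ν f hf n x (f y)]
    exact ENNReal.le_tsum (⟨y, rfl⟩ : {z : X // f z = f y})
  have h2 : lsRoot ν (f x) (f y) ≤ lsRoot ν i j :=
    lsRoot_base_aux ν hKt hK hcν i j (f x) (f y)
  exact ENNReal.inv_le_inv.mpr (h1.trans h2)
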